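/- The tensor commutation matrix 2⊗3 is given in terms of the Pauli matrices σ₁,σ₂,σ₃ and Gell-Mann matrices λ₁,…,λ₈ by: U_{2⊗3} = ((1/2)I₂ + (1/2)σ₃) ⊗ ((1/3)I₃ + (1/2)λ₃ + (√3/6)λ₈) + ((1/2)σ₁ + (i/2)σ₂) ⊗ ((1/2)λ₁ − (i/2)λ₂) + ((1/2)I₂ + (1/2)σ₃) ⊗ ((1/2)λ₆ − (i/2)λ₇) + ((1/2)I₂ − (1/2)σ₃) ⊗ ((1/2)λ₁ + (i/2)λ₂) + ((1/2)σ₁ − (i/2)σ₂) ⊗ ((1/2)λ₆ + (i/2)λ₇) + ((1/2)I₂ − (1/2)σ₃) ⊗ ((1/3)I₃ − (√3/3)λ₈). -/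

import Mathlib

open Matrix
set_option maxHeartbeats 4000000

noncomputable def pauli1 : Matrix (Fin 2) (Fin 2) ℂ := !![0, 1; 1, 0]
noncomputable def pauli2 : Matrix (Fin 2) (Fin 2) ℂ := !![0, -Complex.I; Complex.I, 0]
noncomputable def pauli3 : Matrix (Fin 2) (Fin 2) ℂ := !![1, 0; 0, -1]

noncomputable def gm1 : Matrix (Fin 3) (Fin 3) ℂ :=
  Matrix.single 0 1 1 + Matrix.single 1 0 1
noncomputable def gm2 : Matrix (Fin 3) (Fin 3) ℂ :=
  (-Complex.I) • Matrix.single 0 1 1 + Complex.I • Matrix.single 1 0 1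
noncomputable def gm3 : Matrix (Fin 3) (Fin 3) ℂ :=
  Matrix.single 0 0 1 - Matrix.single 1 1 1
noncomputable def gm6 : Matrix (Fin 3) (Fin 3) ℂ :=
  Matrix.single 1 2 1 + Matrix.single 2 1 1
noncomputable def gm7 : Matrix (Fin 3) (Fin 3) ℂ :=
  (-Complex.I) • Matrix.single 1 2 1 + Complex.I • Matrix.single 2 1 1
noncomputable def gm8 : Matrix (Fin 3) (Fin 3) ℂ :=
  ((Real.sqrt 3 : ℝ) : ℂ)⁻¹ •
    (Matrix.single 0 0 1 + Matrix.single 1 1 1 - (2 : ℂ) • Matrix.single 2 2 1)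

/-- The Kronecker product `A ⊗ B` of a 2×2 matrix with a 3×3 matrix, realized
as a 6×6 matrix with rows and columns flattened lexicographically:
`(A ⊗ B)_{(i₁,i₂),(j₁,j₂)} = A_{i₁ j₁} B_{i₂ j₂}` at row `3·i₁+i₂`,
column `3·j₁+j₂` (zero-based). -/
noncomputable def kron23 (A : Matrix (Fin 2) (Fin 2) ℂ) (B : Matrix (Fin 3) (Fin 3) ℂ) :
    Matrix (Fin 6) (Fin 6) ℂ :=
  Matrix.of fun r s =>
    A ⟨(r : ℕ) / 3, by have := r.isLt; omega⟩ ⟨(s : ℕ) / 3, by have := s.isLt; omega⟩ *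
      B ⟨(r : ℕ) % 3, by omega⟩ ⟨(s : ℕ) % 3, by omega⟩

/-- The Kronecker product `a ⊗ b ∈ ℂ⁶` of column vectors `a ∈ ℂ²`, `b ∈ ℂ³`. -/
noncomputable def vecKron23 (a : Fin 2 → ℂ) (b : Fin 3 → ℂ) : Fin 6 → ℂ :=
  fun r => a ⟨(r : ℕ) / 3, by have := r.isLt; omega⟩ * b ⟨(r : ℕ) % 3, by omega⟩

/-- The Kronecker product `a ⊗ b ∈ ℂ⁶` of column vectors `a ∈ ℂ³`, `b ∈ ℂ²`. -/
noncomputable def vecKron32 (a : Fin 3 → ℂ) (b : Fin 2 → ℂ) : Fin 6 → ℂ :=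
  fun r => a ⟨(r : ℕ) / 2, by have := r.isLt; omega⟩ * b ⟨(r : ℕ) % 2, by omega⟩

lemma sqrt3_ne : ((Real.sqrt 3 : ℝ) : ℂ) ≠ 0 :=
  Complex.ofReal_ne_zero.mpr (by positivity)

lemma sqrt3_inv : ((Real.sqrt 3 : ℝ) : ℂ)⁻¹ = ((Real.sqrt 3 : ℝ) : ℂ) / 3 := by
  have h3 : ((Real.sqrt 3 : ℝ) : ℂ) * ((Real.sqrt 3 : ℝ) : ℂ) = 3 := by
    norm_cast
    rw [Real.mul_self_sqrt] <;> norm_num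
  field_simp
  linear_combination -h3

lemma sqrt3_sq2 : ((Real.sqrt 3 : ℝ) : ℂ)^2 = 3 := by
  rw [sq]
  norm_cast
  rw [Real.mul_self_sqrt] <;> norm_num

lemma sqrt3_sq : ((Real.sqrt 3 : ℝ) : ℂ) * ((Real.sqrt 3 : ℝ) : ℂ) = 3 := by
  norm_cast
  rw [Real.mul_self_sqrt] <;> norm_num

lemma hA1 : (1 / 2 : ℂ) • (1 : Matrix (Fin 2) (Fin 2) ℂ) + (1 / 2 : ℂ) • pauli3 =
    !![1, 0; 0, 0] := by
  ext i j
  fin_cases i <;> fin_cases j <;> simp [pauli3, Matrix.one_apply] <;> first | rfl | ((try ring_nf); (try norm_num [Matrix.vecHead, Matrix.vecTail, sqrt3_sq2, Complex.I_sq]); done)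

lemma hA2 : (1 / 2 : ℂ) • pauli1 + (Complex.I / 2) • pauli2 = !![0, 1; 0, 0] := by
  ext i j
  fin_cases i <;> fin_cases j <;>
    simp [pauli1, pauli2] <;> first | rfl | ((try ring_nf); (try norm_num [Matrix.vecHead, Matrix.vecTail, sqrt3_sq2, Complex.I_sq]); done)

lemma hA3 : (1 / 2 : ℂ) • (1 : Matrix (Fin 2) (Fin 2) ℂ) - (1 / 2 : ℂ) • pauli3 =
    !![0, 0; 0, 1] := by
  ext i j
  fin_cases i <;> fin_cases j <;> simp [pauli3, Matrix.one_apply] <;> first | rfl | ((try ring_nf); (try norm_num [Matrix.vecHead, Matrix.vecTail, sqrt3_sq2, Complex.I_sq]); done)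

lemma hA4 : (1 / 2 : ℂ) • pauli1 - (Complex.I / 2) • pauli2 = !![0, 0; 1, 0] := by
  ext i j
  fin_cases i <;> fin_cases j <;>
    simp [pauli1, pauli2] <;> first | rfl | ((try ring_nf); (try norm_num [Matrix.vecHead, Matrix.vecTail, sqrt3_sq2, Complex.I_sq]); done)

lemma hB1 : (1 / 3 : ℂ) • (1 : Matrix (Fin 3) (Fin 3) ℂ) + (1 / 2 : ℂ) • gm3
    + ((Real.sqrt 3 : ℂ) / 6) • gm8 = !![1, 0, 0; 0, 0, 0; 0, 0, 0] := by
  ext i j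
  fin_cases i <;> fin_cases j <;>
    simp [gm3, gm8, Matrix.single, Matrix.one_apply, sqrt3_inv] <;>
    first | rfl | ((try ring_nf); (try norm_num [Matrix.vecHead, Matrix.vecTail, sqrt3_sq2, Complex.I_sq]); done)

lemma hB2 : (1 / 2 : ℂ) • gm1 - (Complex.I / 2) • gm2 = !![0, 0, 0; 1, 0, 0; 0, 0, 0] := by
  ext i j
  fin_cases i <;> fin_cases j <;>
    simp [gm1, gm2, Matrix.single] <;> first | rfl | ((try ring_nf); (try norm_num [Matrix.vecHead, Matrix.vecTail, sqrt3_sq2, Complex.I_sq]); done)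

lemma hB3 : (1 / 2 : ℂ) • gm6 - (Complex.I / 2) • gm7 = !![0, 0, 0; 0, 0, 0; 0, 1, 0] := by
  ext i j
  fin_cases i <;> fin_cases j <;>
    simp [gm6, gm7, Matrix.single] <;> first | rfl | ((try ring_nf); (try norm_num [Matrix.vecHead, Matrix.vecTail, sqrt3_sq2, Complex.I_sq]); done)

lemma hB4 : (1 / 2 : ℂ) • gm1 + (Complex.I / 2) • gm2 = !![0, 1, 0; 0, 0, 0; 0, 0, 0] := by
  ext i j
  fin_cases i <;> fin_cases j <;>
    simp [gm1, gm2, Matrix.single] <;> first | rfl | ((try ring_nf); (try norm_num [Matrix.vecHead, Matrix.vecTail, sqrt3_sq2, Complex.I_sq]); done)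

lemma hB5 : (1 / 2 : ℂ) • gm6 + (Complex.I / 2) • gm7 = !![0, 0, 0; 0, 0, 1; 0, 0, 0] := by
  ext i j
  fin_cases i <;> fin_cases j <;>
    simp [gm6, gm7, Matrix.single] <;> first | rfl | ((try ring_nf); (try norm_num [Matrix.vecHead, Matrix.vecTail, sqrt3_sq2, Complex.I_sq]); done)

lemma hB6 : (1 / 3 : ℂ) • (1 : Matrix (Fin 3) (Fin 3) ℂ)
    - ((Real.sqrt 3 : ℂ) / 3) • gm8 = !![0, 0, 0; 0, 0, 0; 0, 0, 1] := by
  ext i j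
  fin_cases i <;> fin_cases j <;>
    simp [gm8, Matrix.single, Matrix.one_apply, sqrt3_inv] <;>
    first | rfl | ((try ring_nf); (try norm_num [Matrix.vecHead, Matrix.vecTail, sqrt3_sq2, Complex.I_sq]); done)

lemma fin2_mk0 (h : 0 < 2) : (⟨0, h⟩ : Fin 2) = 0 := rfl
lemma fin2_mk1 (h : 1 < 2) : (⟨1, h⟩ : Fin 2) = 1 := rfl
lemma fin3_mk0 (h : 0 < 3) : (⟨0, h⟩ : Fin 3) = 0 := rfl
lemma fin3_mk1 (h : 1 < 3) : (⟨1, h⟩ : Fin 3) = 1 := rfl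
lemma fin3_mk2 (h : 2 < 3) : (⟨2, h⟩ : Fin 3) = 2 := rfl

/-- the tensor commutation matrix `U_{2⊗3}` (the 6×6 matrix
satisfying `U(a ⊗ b) = b ⊗ a` for all `a ∈ ℂ²`, `b ∈ ℂ³`) is given in terms of
the Pauli and Gell-Mann matrices by the six-term Kronecker-product formula. -/
theorem stmt13 (U : Matrix (Fin 6) (Fin 6) ℂ)
    (hU : ∀ (a : Fin 2 → ℂ) (b : Fin 3 → ℂ), U.mulVec (vecKron23 a b) = vecKron32 b a) :
    U = kron23 ((1 / 2 : ℂ) • 1 + (1 / 2 : ℂ) • pauli3)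
          ((1 / 3 : ℂ) • 1 + (1 / 2 : ℂ) • gm3 + ((Real.sqrt 3 : ℂ) / 6) • gm8)
        + kron23 ((1 / 2 : ℂ) • pauli1 + (Complex.I / 2) • pauli2)
          ((1 / 2 : ℂ) • gm1 - (Complex.I / 2) • gm2)
        + kron23 ((1 / 2 : ℂ) • 1 + (1 / 2 : ℂ) • pauli3)
          ((1 / 2 : ℂ) • gm6 - (Complex.I / 2) • gm7)
        + kron23 ((1 / 2 : ℂ) • 1 - (1 / 2 : ℂ) • pauli3)
          ((1 / 2 : ℂ) • gm1 + (Complex.I / 2) • gm2)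
        + kron23 ((1 / 2 : ℂ) • pauli1 - (Complex.I / 2) • pauli2)
          ((1 / 2 : ℂ) • gm6 + (Complex.I / 2) • gm7)
        + kron23 ((1 / 2 : ℂ) • 1 - (1 / 2 : ℂ) • pauli3)
          ((1 / 3 : ℂ) • 1 - ((Real.sqrt 3 : ℂ) / 3) • gm8) := by
  have key : ∀ (s r : Fin 6), U r s =
      vecKron32 (Pi.single ⟨(s:ℕ)%3, by omega⟩ 1)
        (Pi.single ⟨(s:ℕ)/3, by have := s.isLt; omega⟩ 1) r := by
    intro s r
    have hv : vecKron23 (Pi.single ⟨(s:ℕ)/3, by have := s.isLt; omega⟩ 1)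
        (Pi.single ⟨(s:ℕ)%3, by omega⟩ 1) = Pi.single s 1 := by
      funext t
      fin_cases s <;> fin_cases t <;>
        simp [vecKron23, Pi.single_apply, Fin.ext_iff] <;> rfl
    have h := congrFun (hU (Pi.single ⟨(s:ℕ)/3, by have := s.isLt; omega⟩ 1)
        (Pi.single ⟨(s:ℕ)%3, by omega⟩ 1)) r
    rw [hv, Matrix.mulVec_single] at h
    simpa using h
  rw [hA1, hA2, hA3, hA4, hB1, hB2, hB3, hB4, hB5, hB6]
  ext r s
  rw [key s r]
  fin_cases r <;> fin_cases s <;>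
    simp only [show ((0:Fin 6):ℕ)=0 from rfl, show ((1:Fin 6):ℕ)=1 from rfl,
      show ((2:Fin 6):ℕ)=2 from rfl, show ((3:Fin 6):ℕ)=3 from rfl,
      show ((4:Fin 6):ℕ)=4 from rfl, show ((5:Fin 6):ℕ)=5 from rfl] <;>
    norm_num [vecKron32, kron23, Pi.single_apply, Fin.ext_iff, Fin.mk_zero, Fin.mk_one,
      Matrix.vecHead, Matrix.vecTail, Matrix.cons_val_two, fin2_mk0, fin2_mk1, fin3_mk0, fin3_mk1, fin3_mk2]
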